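/- Let ω = e^{2πi/3} and let A ⊆ GL(3,ℂ) be the abelian group generated by g₁ = diag(1,ω,ω²) and the scalar matrix ωI (so A ≅ ℤ/3 × ℤ/3), acting on ℂ[X,Y,Z] by linear substitution. Then the invariant ring ℂ[X,Y,Z]^A is isomorphic, as a ℂ-algebra, to ℂ[x,y,z,w]/(x³ − yzw), via the map sending x ↦ XYZ, y ↦ X³, z ↦ Y³, w ↦ Z³. -/

import Mathlib

noncomputable section
open MvPolynomial Complex

/-- ω = e^{2πi/3}, a primitive cube root of unity. -/
def ω : ℂ := Complex.exp (2 * Real.pi * Complex.I / 3)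

/-- g₁ = diag(1, ω, ω²). -/
def g₁ : Matrix (Fin 3) (Fin 3) ℂ := Matrix.diagonal ![1, ω, ω ^ 2]

/-- A ≅ ℤ/3 × ℤ/3, the abelian group of matrices generated by g₁ and the scalar
matrix ωI (both of order 3, so the multiplicative closure is already a group). -/
def A : Submonoid (Matrix (Fin 3) (Fin 3) ℂ) :=
  Submonoid.closure {g₁, ω • (1 : Matrix (Fin 3) (Fin 3) ℂ)}

/-- the action of a 3×3 matrix on ℂ[X,Y,Z] by linear substitution of the variables. -/
def act (g : Matrix (Fin 3) (Fin 3) ℂ) :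
    MvPolynomial (Fin 3) ℂ →ₐ[ℂ] MvPolynomial (Fin 3) ℂ :=
  aeval (fun i => ∑ j, C (g i j) * X j)

/-- the invariant ring ℂ[X,Y,Z]^A. -/
def invariants : Subalgebra ℂ (MvPolynomial (Fin 3) ℂ) where
  carrier := {p | ∀ g ∈ A, act g p = p}
  mul_mem' := fun ha hb g hg => by rw [map_mul, ha g hg, hb g hg]
  one_mem' := fun g hg => map_one (act g)
  add_mem' := fun ha hb g hg => by rw [map_add, ha g hg, hb g hg]
  zero_mem' := fun g hg => map_zero (act g)
  algebraMap_mem' := fun r g hg => (act g).commutes r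

/-- the images of (x, y, z, w): x ↦ XYZ, y ↦ X³, z ↦ Y³, w ↦ Z³.  Variables of
ℂ[x,y,z,w] are x = X 0, y = X 1, z = X 2, w = X 3. -/
def fvec : Fin 4 → MvPolynomial (Fin 3) ℂ :=
  ![X 0 * X 1 * X 2, X 0 ^ 3, X 1 ^ 3, X 2 ^ 3]

/-- x³ − yzw in ℂ[x,y,z,w]. -/
def Grel : MvPolynomial (Fin 4) ℂ := X 0 ^ 3 - X 1 * X 2 * X 3

lemma omega_prim : IsPrimitiveRoot ω 3 := by
  have h := Complex.isPrimitiveRoot_exp 3 (by norm_num)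
  rw [ω]; convert h using 3 <;> norm_num

lemma omega_pow_three : ω ^ 3 = 1 := omega_prim.pow_eq_one

lemma omega_sq_pow_three : (ω ^ 2) ^ 3 = 1 := by
  rw [← pow_mul, mul_comm, pow_mul, omega_pow_three, one_pow]

lemma act_X (g : Matrix (Fin 3) (Fin 3) ℂ) (i : Fin 3) :
    act g (X i) = ∑ j, C (g i j) * X j := by simp [act]

lemma act_mul (g h : Matrix (Fin 3) (Fin 3) ℂ) :
    act (g * h) = (act h).comp (act g) := by
  apply MvPolynomial.algHom_ext; intro i
  rw [AlgHom.comp_apply, act_X, act_X, map_sum]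
  simp only [map_mul, act_X, Matrix.mul_apply, map_sum, Finset.sum_mul, Finset.mul_sum]
  rw [Finset.sum_comm]
  exact Finset.sum_congr rfl fun j _ => Finset.sum_congr rfl fun k _ => by
    rw [show (act h) (C (g i j)) = C (g i j) from (act h).commutes (g i j)]; ring

lemma act_one : act (1 : Matrix (Fin 3) (Fin 3) ℂ) = AlgHom.id ℂ _ := by
  apply MvPolynomial.algHom_ext; intro i
  rw [act_X]
  simp [Matrix.one_apply, apply_ite C, ite_mul, Finset.sum_ite_eq]

lemma mem_invariants_of_gen {p : MvPolynomial (Fin 3) ℂ}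
    (h1 : act g₁ p = p) (h2 : act (ω • (1 : Matrix (Fin 3) (Fin 3) ℂ)) p = p)
    (g : Matrix (Fin 3) (Fin 3) ℂ) (hg : g ∈ A) : act g p = p := by
  induction hg using Submonoid.closure_induction with
  | mem x hx =>
    rcases hx with rfl | rfl
    · exact h1
    · exact h2
  | one => rw [act_one]; rfl
  | mul x y hx hy ihx ihy => rw [act_mul, AlgHom.comp_apply, ihx, ihy]

lemma act_diag_X (d : Fin 3 → ℂ) (i : Fin 3) :
    act (Matrix.diagonal d) (X i) = C (d i) * X i := by
  rw [act_X, Finset.sum_eq_single i]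
  · rw [Matrix.diagonal_apply_eq]
  · intro b _ hb
    rw [Matrix.diagonal_apply_ne d (Ne.symm hb), map_zero, zero_mul]
  · intro h; exact absurd (Finset.mem_univ i) h

lemma act_diag_monomial (d : Fin 3 → ℂ) (m : Fin 3 →₀ ℕ) (c : ℂ) :
    act (Matrix.diagonal d) (monomial m c) = monomial m (c * ∏ i, d i ^ m i) := by
  rw [monomial_eq, monomial_eq, map_mul]
  have hc : act (Matrix.diagonal d) (C c) = C c := (act _).commutes c
  rw [hc, map_finsuppProd]
  simp only [map_pow, act_diag_X, mul_pow]
  simp only [← map_pow]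
  rw [Finsupp.prod_mul, ← map_finsuppProd, Finsupp.prod_pow, map_mul]
  ring

lemma coeff_act_diag (d : Fin 3 → ℂ) (p : MvPolynomial (Fin 3) ℂ) (m : Fin 3 →₀ ℕ) :
    coeff m (act (Matrix.diagonal d) p) = (∏ i, d i ^ m i) * coeff m p := by
  induction p using MvPolynomial.induction_on' with
  | monomial n c =>
    rw [act_diag_monomial, coeff_monomial, coeff_monomial]
    split_ifs with h
    · subst h; ring
    · ring
  | add p q hp hq => rw [map_add, coeff_add, coeff_add, hp, hq]; ring

lemma smul_one_eq_diag : ω • (1 : Matrix (Fin 3) (Fin 3) ℂ) = Matrix.diagonal (fun _ => ω) := by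
  ext i j
  by_cases h : i = j <;> simp [Matrix.one_apply, Matrix.diagonal_apply, h]

lemma prod_g1 (m : Fin 3 →₀ ℕ) : (∏ i, (![1, ω, ω ^ 2] : Fin 3 → ℂ) i ^ m i) = ω ^ (m 1 + 2 * m 2) := by
  rw [Fin.prod_univ_three]
  simp only [Matrix.cons_val_zero, Matrix.cons_val_one, Matrix.head_cons, Matrix.cons_val_two,
    Matrix.tail_cons]
  rw [one_pow, one_mul, ← pow_mul, ← pow_add]

lemma prod_sc (m : Fin 3 →₀ ℕ) : (∏ i, (fun _ => ω) i ^ m i) = ω ^ (m 0 + m 1 + m 2) := by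
  rw [Fin.prod_univ_three, pow_add, pow_add]


lemma invariant_support_cong {p : MvPolynomial (Fin 3) ℂ}
    (h1 : act g₁ p = p) (h2 : act (ω • (1 : Matrix (Fin 3) (Fin 3) ℂ)) p = p)
    {m : Fin 3 →₀ ℕ} (hm : m ∈ p.support) :
    m 0 % 3 = m 1 % 3 ∧ m 1 % 3 = m 2 % 3 := by
  have hc : coeff m p ≠ 0 := mem_support_iff.mp hm
  have e1 : ω ^ (m 1 + 2 * m 2) * coeff m p = coeff m p := by
    conv_rhs => rw [← h1]
    rw [g₁, coeff_act_diag, prod_g1]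
  have e2 : ω ^ (m 0 + m 1 + m 2) * coeff m p = coeff m p := by
    conv_rhs => rw [← h2]
    rw [smul_one_eq_diag, coeff_act_diag, prod_sc]
  have d1 : (3 : ℕ) ∣ m 1 + 2 * m 2 := by
    rw [← omega_prim.pow_eq_one_iff_dvd]
    have h0 : (ω ^ (m 1 + 2 * m 2) - 1) * coeff m p = 0 := by linear_combination e1
    rcases mul_eq_zero.mp h0 with h | h
    · exact sub_eq_zero.mp h
    · exact absurd h hc
  have d2 : (3 : ℕ) ∣ m 0 + m 1 + m 2 := by
    rw [← omega_prim.pow_eq_one_iff_dvd]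
    have h0 : (ω ^ (m 0 + m 1 + m 2) - 1) * coeff m p = 0 := by linear_combination e2
    rcases mul_eq_zero.mp h0 with h | h
    · exact sub_eq_zero.mp h
    · exact absurd h hc
  omega

lemma fvec_mem (i : Fin 4) : fvec i ∈ invariants := by
  have key : ∀ (d : Fin 3 → ℂ), d 0 * d 1 * d 2 = 1 → (d 0)^3 = 1 → (d 1)^3 = 1 → (d 2)^3 = 1 →
      ∀ i : Fin 4, act (Matrix.diagonal d) (fvec i) = fvec i := by
    intro d hp h0 h1 h2 i
    fin_cases i
    · show act _ (X 0 * X 1 * X 2) = X 0 * X 1 * X 2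
      rw [map_mul, map_mul, act_diag_X, act_diag_X, act_diag_X]
      calc (C (d 0) : MvPolynomial (Fin 3) ℂ) * X 0 * (C (d 1) * X 1) * (C (d 2) * X 2)
          = C (d 0) * C (d 1) * C (d 2) * (X 0 * X 1 * X 2) := by ring
        _ = X 0 * X 1 * X 2 := by
            rw [← map_mul, ← map_mul, hp, map_one, one_mul]
    · show act _ (X 0 ^ 3) = X 0 ^ 3
      rw [map_pow, act_diag_X, mul_pow, ← map_pow, h0, map_one, one_mul]
    · show act _ (X 1 ^ 3) = X 1 ^ 3
      rw [map_pow, act_diag_X, mul_pow, ← map_pow, h1, map_one, one_mul]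
    · show act _ (X 2 ^ 3) = X 2 ^ 3
      rw [map_pow, act_diag_X, mul_pow, ← map_pow, h2, map_one, one_mul]
  intro g hg
  refine mem_invariants_of_gen ?_ ?_ g hg
  · rw [g₁]
    refine key _ ?_ ?_ ?_ ?_ i <;>
      simp only [Matrix.cons_val_zero, Matrix.cons_val_one, Matrix.head_cons,
        Matrix.cons_val_two, Matrix.tail_cons]
    · rw [one_mul, show ω * ω ^ 2 = ω ^ 3 by ring, omega_pow_three]
    · exact one_pow 3
    · exact omega_pow_three
    · exact omega_sq_pow_three
  · rw [smul_one_eq_diag]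
    have hω : ω * ω * ω = 1 := by rw [show ω * ω * ω = ω ^ 3 by ring, omega_pow_three]
    exact key (fun _ => ω) hω omega_pow_three omega_pow_three omega_pow_three i

def Fm (n : Fin 4 →₀ ℕ) : Fin 3 →₀ ℕ :=
  Finsupp.equivFunOnFinite.symm ![n 0 + 3 * n 1, n 0 + 3 * n 2, n 0 + 3 * n 3]

lemma Fm_apply (n : Fin 4 →₀ ℕ) (i : Fin 3) :
    Fm n i = ![n 0 + 3 * n 1, n 0 + 3 * n 2, n 0 + 3 * n 3] i := rfl

lemma aeval_fvec_monomial (n : Fin 4 →₀ ℕ) (c : ℂ) :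
    aeval fvec (monomial n c) = monomial (Fm n) c := by
  rw [aeval_monomial, monomial_eq, Finsupp.prod_pow, Finsupp.prod_pow,
    Fin.prod_univ_four, Fin.prod_univ_three]
  have h0 : Fm n 0 = n 0 + 3 * n 1 := rfl
  have h1 : Fm n 1 = n 0 + 3 * n 2 := rfl
  have h2 : Fm n 2 = n 0 + 3 * n 3 := rfl
  rw [h0, h1, h2]
  show C c * _ = _
  simp only [fvec, Matrix.cons_val_zero, Matrix.cons_val_one, Matrix.head_cons,
    Matrix.cons_val_two, Matrix.tail_cons, Matrix.cons_val_three]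
  ring

lemma Fm_inj {n n' : Fin 4 →₀ ℕ} (h0 : n 0 < 3) (h0' : n' 0 < 3) (h : Fm n = Fm n') : n = n' := by
  have e0 : n 0 + 3 * n 1 = n' 0 + 3 * n' 1 := by
    have := congrArg (fun f => f 0) h; simpa [Fm_apply] using this
  have e1 : n 0 + 3 * n 2 = n' 0 + 3 * n' 2 := by
    have := congrArg (fun f => f 1) h; simpa [Fm_apply] using this
  have e2 : n 0 + 3 * n 3 = n' 0 + 3 * n' 3 := by
    have := congrArg (fun f => f 2) h; simpa [Fm_apply] using this
  ext i
  fin_cases i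
  · show n 0 = n' 0; omega
  · show n 1 = n' 1; omega
  · show n 2 = n' 2; omega
  · show n 3 = n' 3; omega

lemma aeval_fvec_injective_on_reduced {p : MvPolynomial (Fin 4) ℂ}
    (hs : ∀ m ∈ p.support, m 0 < 3) (h : aeval fvec p = 0) : p = 0 := by
  by_contra hp
  obtain ⟨n, hn⟩ : ∃ n, n ∈ p.support := by
    rcases Finset.nonempty_iff_ne_empty.mpr (fun he => hp (support_eq_empty.mp he)) with ⟨n, hn⟩
    exact ⟨n, hn⟩
  have key : coeff (Fm n) (aeval fvec p) = coeff n p := by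
    conv_lhs => rw [p.as_sum]
    rw [map_sum, coeff_sum]
    simp only [aeval_fvec_monomial]
    rw [Finset.sum_eq_single n (fun m hm hmn => by
      rw [coeff_monomial, if_neg (fun hFm => hmn (Fm_inj (hs m hm) (hs n hn) hFm))])
      (fun hnn => absurd hn hnn)]
    rw [coeff_monomial, if_pos rfl]
  rw [h, coeff_zero] at key
  exact mem_support_iff.mp hn key.symm

lemma redX (k r : ℕ) :
    X 0 ^ (3 * k + r) - (X 1 * X 2 * X 3 : MvPolynomial (Fin 4) ℂ) ^ k * X 0 ^ r ∈
      Ideal.span {Grel} := by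
  induction k with
  | zero => simp
  | succ k ih =>
    have key : X 0 ^ (3 * (k + 1) + r) - (X 1 * X 2 * X 3 : MvPolynomial (Fin 4) ℂ) ^ (k + 1) * X 0 ^ r
        = X 0 ^ 3 * (X 0 ^ (3 * k + r) - (X 1 * X 2 * X 3) ^ k * X 0 ^ r)
          + ((X 1 * X 2 * X 3) ^ k * X 0 ^ r) * Grel := by
      rw [Grel]; ring
    rw [key]
    exact Ideal.add_mem _ (Ideal.mul_mem_left _ _ ih)
      (Ideal.mul_mem_left _ _ (Ideal.subset_span (Set.mem_singleton _)))

def Mred (m : Fin 4 →₀ ℕ) : Fin 4 →₀ ℕ :=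
  Finsupp.equivFunOnFinite.symm ![m 0 % 3, m 1 + m 0 / 3, m 2 + m 0 / 3, m 3 + m 0 / 3]

lemma monomial_expand (m : Fin 4 →₀ ℕ) (c : ℂ) :
    (monomial m c : MvPolynomial (Fin 4) ℂ)
      = C c * (X 0 ^ m 0 * X 1 ^ m 1 * X 2 ^ m 2 * X 3 ^ m 3) := by
  rw [monomial_eq, Finsupp.prod_pow, Fin.prod_univ_four]

lemma mono_red (m : Fin 4 →₀ ℕ) (c : ℂ) :
    (monomial m c : MvPolynomial (Fin 4) ℂ) - monomial (Mred m) c ∈ Ideal.span {Grel} := by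
  have hM0 : Mred m 0 = m 0 % 3 := rfl
  have hM1 : Mred m 1 = m 1 + m 0 / 3 := rfl
  have hM2 : Mred m 2 = m 2 + m 0 / 3 := rfl
  have hM3 : Mred m 3 = m 3 + m 0 / 3 := rfl
  obtain ⟨k, r, hkr, hrlt⟩ : ∃ k r, m 0 = 3 * k + r ∧ r < 3 :=
    ⟨m 0 / 3, m 0 % 3, by omega, by omega⟩
  have hdiv : m 0 / 3 = k := by omega
  have hmod : m 0 % 3 = r := by omega
  have key : (monomial m c : MvPolynomial (Fin 4) ℂ) - monomial (Mred m) c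
      = (C c * (X 1 ^ m 1 * X 2 ^ m 2 * X 3 ^ m 3)) *
        (X 0 ^ (3 * k + r) - (X 1 * X 2 * X 3) ^ k * X 0 ^ r) := by
    rw [monomial_expand, monomial_expand, hM0, hM1, hM2, hM3, hdiv, hmod, hkr]
    ring
  rw [key]
  exact Ideal.mul_mem_left _ _ (redX _ _)

lemma reduce_exists (p : MvPolynomial (Fin 4) ℂ) :
    ∃ q : MvPolynomial (Fin 4) ℂ,
      (∀ m ∈ q.support, m 0 < 3) ∧ p - q ∈ Ideal.span {Grel} := by
  induction p using MvPolynomial.induction_on' with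
  | monomial m c =>
    refine ⟨monomial (Mred m) c, ?_, mono_red m c⟩
    intro m' hm'
    have h := Finset.mem_singleton.mp (support_monomial_subset hm')
    subst h
    show m 0 % 3 < 3
    omega
  | add p q hp hq =>
    obtain ⟨q1, hs1, hi1⟩ := hp
    obtain ⟨q2, hs2, hi2⟩ := hq
    refine ⟨q1 + q2, ?_, ?_⟩
    · intro m hm
      rcases Finset.mem_union.mp (Finsupp.support_add hm) with h | h
      · exact hs1 m h
      · exact hs2 m h
    · have : p + q - (q1 + q2) = (p - q1) + (q - q2) := by ring
      rw [this]
      exact Ideal.add_mem _ hi1 hi2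

def Npre (m : Fin 3 →₀ ℕ) : Fin 4 →₀ ℕ :=
  Finsupp.equivFunOnFinite.symm ![m 0 % 3, m 0 / 3, m 1 / 3, m 2 / 3]

lemma Fm_Npre {m : Fin 3 →₀ ℕ} (hc : m 0 % 3 = m 1 % 3 ∧ m 1 % 3 = m 2 % 3) :
    Fm (Npre m) = m := by
  have h0 : Npre m 0 = m 0 % 3 := rfl
  have h1 : Npre m 1 = m 0 / 3 := rfl
  have h2 : Npre m 2 = m 1 / 3 := rfl
  have h3 : Npre m 3 = m 2 / 3 := rfl
  ext i
  fin_cases i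
  · show Npre m 0 + 3 * Npre m 1 = m 0
    rw [h0, h1]; omega
  · show Npre m 0 + 3 * Npre m 2 = m 1
    rw [h0, h2]; omega
  · show Npre m 0 + 3 * Npre m 3 = m 2
    rw [h0, h3]; omega

lemma exists_preimage {p : MvPolynomial (Fin 3) ℂ} (hp : p ∈ invariants) :
    ∃ q : MvPolynomial (Fin 4) ℂ, aeval fvec q = p := by
  have h1 : act g₁ p = p := hp g₁ (Submonoid.subset_closure (Set.mem_insert _ _))
  have h2 : act (ω • (1 : Matrix (Fin 3) (Fin 3) ℂ)) p = p :=
    hp _ (Submonoid.subset_closure (Set.mem_insert_of_mem _ rfl))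
  refine ⟨∑ m ∈ p.support, monomial (Npre m) (coeff m p), ?_⟩
  rw [map_sum]
  conv_rhs => rw [p.as_sum]
  refine Finset.sum_congr rfl fun m hm => ?_
  rw [aeval_fvec_monomial, Fm_Npre (invariant_support_cong h1 h2 hm)]

def φ : MvPolynomial (Fin 4) ℂ →ₐ[ℂ] invariants :=
  aeval (fun i => (⟨fvec i, fvec_mem i⟩ : invariants))

lemma φ_coe (p : MvPolynomial (Fin 4) ℂ) :
    ((φ p : invariants) : MvPolynomial (Fin 3) ℂ) = aeval fvec p := by
  have h : invariants.val.comp φ = aeval fvec := by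
    apply MvPolynomial.algHom_ext
    intro i
    simp [φ]
  exact AlgHom.congr_fun h p

lemma aeval_fvec_Grel : aeval fvec Grel = 0 := by
  rw [Grel, map_sub, map_pow, map_mul, map_mul, aeval_X, aeval_X, aeval_X, aeval_X]
  show (X 0 * X 1 * X 2 : MvPolynomial (Fin 3) ℂ) ^ 3 - X 0 ^ 3 * (X 1 ^ 3) * (X 2 ^ 3) = 0
  ring

lemma φ_span_zero : ∀ a ∈ Ideal.span {Grel}, φ a = 0 := by
  intro a ha
  rcases Ideal.mem_span_singleton.mp ha with ⟨r, rfl⟩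
  have hG : φ Grel = 0 := by
    apply Subtype.ext
    rw [φ_coe, aeval_fvec_Grel]
    rfl
  rw [map_mul, hG, zero_mul]

lemma aeval_fvec_span_zero {a : MvPolynomial (Fin 4) ℂ} (ha : a ∈ Ideal.span {Grel}) :
    aeval fvec a = 0 := by
  rcases Ideal.mem_span_singleton.mp ha with ⟨r, rfl⟩
  rw [map_mul, aeval_fvec_Grel, zero_mul]

def ψ : (MvPolynomial (Fin 4) ℂ ⧸ Ideal.span {Grel}) →ₐ[ℂ] invariants :=
  Ideal.Quotient.liftₐ _ φ φ_span_zero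

lemma ψ_mk (p : MvPolynomial (Fin 4) ℂ) :
    ψ (Ideal.Quotient.mk (Ideal.span {Grel}) p) = φ p := rfl

/-- ℂ[X,Y,Z]^{ℤ/3×ℤ/3} ≅ ℂ[x,y,z,w]/(x³−yzw) via x ↦ XYZ, y ↦ X³, z ↦ Y³, w ↦ Z³. -/
theorem abelian_invariant_ring_iso :
    ∃ e : (MvPolynomial (Fin 4) ℂ ⧸ Ideal.span {Grel}) ≃ₐ[ℂ] invariants,
      ∀ p : MvPolynomial (Fin 4) ℂ,
        ((e (Ideal.Quotient.mk (Ideal.span {Grel}) p) : invariants) :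
          MvPolynomial (Fin 3) ℂ) = aeval fvec p := by
  have hinj : Function.Injective ψ := by
    rw [injective_iff_map_eq_zero]
    intro x hx
    obtain ⟨p, rfl⟩ := Ideal.Quotient.mk_surjective x
    rw [ψ_mk] at hx
    have hav : aeval fvec p = 0 := by
      rw [← φ_coe, hx]; rfl
    obtain ⟨q, hqs, hpq⟩ := reduce_exists p
    have hq0 : aeval fvec q = 0 := by
      have : aeval fvec (p - q) = 0 := aeval_fvec_span_zero hpq
      rw [map_sub, hav, zero_sub, neg_eq_zero] at this
      exact this
    have : q = 0 := aeval_fvec_injective_on_reduced hqs hq0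
    subst this
    rw [sub_zero] at hpq
    exact Ideal.Quotient.eq_zero_iff_mem.mpr hpq
  have hsurj : Function.Surjective ψ := by
    intro v
    obtain ⟨q, hq⟩ := exists_preimage v.2
    exact ⟨Ideal.Quotient.mk _ q, Subtype.ext (by rw [ψ_mk, φ_coe, hq])⟩
  refine ⟨AlgEquiv.ofBijective ψ ⟨hinj, hsurj⟩, fun p => ?_⟩
  show ((ψ (Ideal.Quotient.mk _ p) : invariants) : MvPolynomial (Fin 3) ℂ) = _
  rw [ψ_mk, φ_coe]
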